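/- Let G be a graph, and suppose clusters are built by the following process: each cluster is initialized as a connected vertex set, and thereafter vertices are added to a cluster C only along a path P in G from a new vertex v to some already-assigned vertex of C, adding the maximal unassigned prefix of P and assigning it to the cluster containing the first assigned vertex on P. Then at all times every cluster induces a connected subgraph of G. -/

import Mathlib

open Classical
variable {V ι : Type*}

lemma seg_connected (G : SimpleGraph V) {v t : V} (p : G.Walk v t) (k : ℕ)
    (hk : k ≤ p.length) :
    (G.induce {x | ∃ j ≤ k, p.getVert j = x}).Connected := by
  induction k with
  | zero =>
    have hset : {x | ∃ j ≤ 0, p.getVert j = x} = {v} := by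
      ext x
      simp [SimpleGraph.Walk.getVert_zero, eq_comm]
    rw [hset]
    rw [SimpleGraph.connected_iff_exists_forall_reachable]
    refine ⟨⟨v, rfl⟩, ?_⟩
    rintro ⟨w, hw⟩
    simp only [Set.mem_singleton_iff] at hw
    subst hw
    rfl
  | succ k ih =>
    have hk' : k ≤ p.length := Nat.le_of_succ_le hk
    have hadj : G.Adj (p.getVert k) (p.getVert (k + 1)) :=
      p.adj_getVert_succ (Nat.lt_of_succ_le hk)
    have hset : {x | ∃ j ≤ k + 1, p.getVert j = x} =
        {x | ∃ j ≤ k, p.getVert j = x} ∪ {p.getVert k, p.getVert (k + 1)} := by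
      ext x
      constructor
      · rintro ⟨j, hj, rfl⟩
        rcases Nat.lt_or_ge j (k + 1) with h | h
        · exact Or.inl ⟨j, Nat.lt_succ_iff.mp h, rfl⟩
        · have : j = k + 1 := le_antisymm hj h
          subst this
          exact Or.inr (Or.inr rfl)
      · rintro (⟨j, hj, rfl⟩ | h | h)
        · exact ⟨j, Nat.le_succ_of_le hj, rfl⟩
        · exact ⟨k, Nat.le_succ k, h.symm⟩
        · exact ⟨k + 1, le_refl _, h.symm⟩
    rw [hset]
    exact SimpleGraph.induce_union_connected (ih hk').preconnected
      (SimpleGraph.induce_pair_connected_of_adj hadj).preconnected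
      ⟨p.getVert k, ⟨k, le_refl _, rfl⟩, Or.inl rfl⟩

/-- One step of the `Assign` procedure preserves the invariant that every cluster induces
a connected subgraph: given a walk from an unassigned vertex `v` to an assigned vertex,
assigning the maximal unassigned prefix of the walk to the cluster of the first assigned
vertex on it keeps all clusters connected. -/
theorem assign_preserves_connected (G : SimpleGraph V) (f : V → Option ι)
    (hinv : ∀ i : ι, {x | f x = some i}.Nonempty → (G.induce {x | f x = some i}).Connected)
    {v t : V} (p : G.Walk v t) (hv : f v = none)
    (k : ℕ) (hk : k ≤ p.length)
    (hprefix : ∀ j < k, f (p.getVert j) = none)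
    (c : ι) (hc : f (p.getVert k) = some c) :
    ∀ i : ι,
      {x | (if ∃ j < k, p.getVert j = x then some c else f x) = some i}.Nonempty →
      (G.induce {x | (if ∃ j < k, p.getVert j = x then some c else f x) = some i}).Connected := by
  intro i hne
  by_cases hic : i = c
  · subst hic
    have hset : {x | (if ∃ j < k, p.getVert j = x then some i else f x) = some i} =
        {x | ∃ j ≤ k, p.getVert j = x} ∪ {x | f x = some i} := by
      ext x
      simp only [Set.mem_setOf_eq, Set.mem_union]
      split_ifs with h
      · rcases h with ⟨j, hj, hjx⟩
        constructor
        · intro _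
          exact Or.inl ⟨j, le_of_lt hj, hjx⟩
        · intro _
          rfl
      · constructor
        · intro hx; exact Or.inr hx
        · rintro (⟨j, hj, hjx⟩ | hx)
          · rcases Nat.lt_or_ge j k with hlt | hge
            · exact absurd ⟨j, hlt, hjx⟩ h
            · have : j = k := le_antisymm hj hge
              subst this; rw [← hjx]; exact hc
          · exact hx
    rw [hset]
    exact SimpleGraph.induce_union_connected (seg_connected G p k hk).preconnected
      (hinv i ⟨p.getVert k, hc⟩).preconnected
      ⟨p.getVert k, ⟨k, le_refl _, rfl⟩, hc⟩
  · have hset : {x | (if ∃ j < k, p.getVert j = x then some c else f x) = some i} =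
        {x | f x = some i} := by
      ext x
      simp only [Set.mem_setOf_eq]
      split_ifs with h
      · rcases h with ⟨j, hj, hjx⟩
        constructor
        · intro hcc; exact absurd (Option.some_injective _ hcc).symm hic
        · intro hx; rw [← hjx] at hx; rw [hprefix j hj] at hx; exact absurd hx (by simp)
      · exact Iff.rfl
    rw [hset] at hne ⊢
    exact hinv i hne
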